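/- If G is an outerplanar graph with maximum degree Δ ≥ 5, then the clique number of L^+(G) is at most Δ. -/

import Mathlib

open SimpleGraph

variable {V : Type*}

/-- Four distinct vertices forming a 4-cycle in `G`. -/
def IsC4 (G : SimpleGraph V) (a b c d : V) : Prop :=
  a ≠ b ∧ a ≠ c ∧ a ≠ d ∧ b ≠ c ∧ b ≠ d ∧ c ≠ d ∧
    G.Adj a b ∧ G.Adj b c ∧ G.Adj c d ∧ G.Adj d a

/-- A proper edge coloring of `G` in which every 4-cycle is rainbow. -/
def IsBColoring (G : SimpleGraph V) {α : Type*} (C : Sym2 V → α) : Prop :=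
  (∀ a b c : V, G.Adj a b → G.Adj a c → b ≠ c → C s(a, b) ≠ C s(a, c)) ∧
  (∀ a b c d : V, IsC4 G a b c d →
    C s(a, b) ≠ C s(b, c) ∧ C s(a, b) ≠ C s(c, d) ∧ C s(a, b) ≠ C s(d, a) ∧
    C s(b, c) ≠ C s(c, d) ∧ C s(b, c) ≠ C s(d, a) ∧ C s(c, d) ≠ C s(d, a))

/-- The minimum number of colors in a B-coloring of `G`. -/
noncomputable def qB (G : SimpleGraph V) : ℕ :=
  sInf {n | ∃ C : Sym2 V → Fin n, IsBColoring G C}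

/-- `e` and `f` are opposite edges of some 4-cycle of `G`. -/
def OppC4 (G : SimpleGraph V) (e f : Sym2 V) : Prop :=
  ∃ a b c d : V, IsC4 G a b c d ∧ e = s(a, b) ∧ f = s(c, d)

/-- Two edges (as unordered pairs) share no vertex. -/
def EdgeDisjoint (e f : Sym2 V) : Prop := ∀ v : V, v ∈ e → v ∉ f

/-- The graph `F(G)` on the edges of `G`: two vertex-disjoint edges are adjacent
iff they are opposite edges of a 4-cycle of `G`. -/
def Fgraph (G : SimpleGraph V) : SimpleGraph G.edgeSet :=
  SimpleGraph.fromRel fun e f =>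
    EdgeDisjoint (e : Sym2 V) (f : Sym2 V) ∧ OppC4 G (e : Sym2 V) (f : Sym2 V)

/-- The extended line graph `L⁺(G)`: edges of `G` are adjacent if they share an
endpoint or are opposite edges of a 4-cycle of `G`. -/
def Lplus (G : SimpleGraph V) : SimpleGraph G.edgeSet :=
  SimpleGraph.fromRel fun e f =>
    (∃ v : V, v ∈ (e : Sym2 V) ∧ v ∈ (f : Sym2 V)) ∨ OppC4 G (e : Sym2 V) (f : Sym2 V)

/-- `H` is a minor of `G`, via branch sets. -/
def HasMinor {W : Type*} (G : SimpleGraph V) (H : SimpleGraph W) : Prop :=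
  ∃ B : W → Set V,
    (∀ w, (G.induce (B w)).Connected) ∧
    (∀ w₁ w₂, w₁ ≠ w₂ → Disjoint (B w₁) (B w₂)) ∧
    (∀ w₁ w₂, H.Adj w₁ w₂ → ∃ v₁ ∈ B w₁, ∃ v₂ ∈ B w₂, G.Adj v₁ v₂)

/-- Planarity via Wagner's theorem: no `K₅` minor and no `K₃,₃` minor. -/
def IsPlanar (G : SimpleGraph V) : Prop :=
  ¬ HasMinor G (completeGraph (Fin 5)) ∧
    ¬ HasMinor G (completeBipartiteGraph (Fin 3) (Fin 3))

/-- Outerplanarity: no `K₄` minor and no `K₂,₃` minor. -/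
def IsOuterplanar (G : SimpleGraph V) : Prop :=
  ¬ HasMinor G (completeGraph (Fin 4)) ∧
    ¬ HasMinor G (completeBipartiteGraph (Fin 2) (Fin 3))

/-- `G` is 2-connected: at least 3 vertices and removing any vertex leaves it connected. -/
def IsTwoConnected (G : SimpleGraph V) : Prop :=
  3 ≤ Nat.card V ∧ ∀ v : V, (G.induce {u | u ≠ v}).Connected

/-- `K₄` minus one edge, on `Fin 4` (the edge between `2` and `3` removed). -/
def K4e : SimpleGraph (Fin 4) :=
  SimpleGraph.fromRel fun x y => s(x, y) ≠ s((2 : Fin 4), (3 : Fin 4))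

/-- The chromatic index: minimum number of colors in a proper edge coloring. -/
noncomputable def chromIndex (G : SimpleGraph V) : ℕ :=
  sInf {n | ∃ C : Sym2 V → Fin n,
    ∀ a b c : V, G.Adj a b → G.Adj a c → b ≠ c → C s(a, b) ≠ C s(a, c)}

/-- `K₆` minus a perfect matching, on `Fin 6` (the matching `01, 23, 45` removed). -/
def K6mM : SimpleGraph (Fin 6) :=
  SimpleGraph.fromRel fun x y => (x : ℕ) / 2 ≠ (y : ℕ) / 2

/-- A path `v₀v₁v₂v₃` together with a vertex `4` adjacent to all four path vertices. -/
def FanGraph : SimpleGraph (Fin 5) :=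
  SimpleGraph.fromRel fun x y =>
    ((x : ℕ) + 1 = (y : ℕ) ∧ (y : ℕ) ≤ 3) ∨ (x : ℕ) = 4



section ExtendedLineGraphHelpers

variable {V : Type*} {G : SimpleGraph V}

private lemma elg_induce_singleton_connected (v : V) : (G.induce {v}).Connected := by
  haveI : Nonempty ({v} : Set V) := ⟨⟨v, rfl⟩⟩
  constructor
  intro x y
  have : x = y := Subtype.ext
    ((Set.eq_of_mem_singleton x.2).trans (Set.eq_of_mem_singleton y.2).symm)
  exact this ▸ Reachable.refl x

private lemma elg_induce_pair_connected {p q : V} (h : G.Adj p q) :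
    (G.induce {p,q}).Connected := by
  haveI : Nonempty ({p,q} : Set V) := ⟨⟨p, by simp⟩⟩
  constructor
  have key : ∀ x : ({p,q} : Set V), (G.induce {p,q}).Reachable ⟨p, by simp⟩ x := by
    intro x
    rcases x.2 with h1 | h1
    · exact (Subtype.ext h1.symm : (⟨p, by simp⟩ : ({p,q} : Set V)) = x) ▸ Reachable.refl _
    · have hx : x = (⟨q, by simp⟩ : ({p,q} : Set V)) := Subtype.ext h1
      rw [hx]
      exact Adj.reachable (by simp [h])
  intro x y
  exact (key x).symm.trans (key y)

private lemma elg_hasMinor_K4 {a b c d : V} (hab : a ≠ b) (hac : a ≠ c) (had : a ≠ d)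
    (hbc : b ≠ c) (hbd : b ≠ d) (hcd : c ≠ d)
    (Aab : G.Adj a b) (Aac : G.Adj a c) (Aad : G.Adj a d)
    (Abc : G.Adj b c) (Abd : G.Adj b d) (Acd : G.Adj c d) :
    HasMinor G (completeGraph (Fin 4)) := by
  have hba := hab.symm; have hca := hac.symm; have hda := had.symm
  have hcb := hbc.symm; have hdb := hbd.symm; have hdc := hcd.symm
  refine ⟨fun i => {![a,b,c,d] i}, fun i => elg_induce_singleton_connected _, ?_, ?_⟩
  · intro i j hij
    have : ![a,b,c,d] i ≠ ![a,b,c,d] j := by fin_cases i <;> fin_cases j <;> simp_all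
    simp [this]
  · intro i j hij
    refine ⟨![a,b,c,d] i, rfl, ![a,b,c,d] j, rfl, ?_⟩
    have hij' : i ≠ j := hij.ne
    fin_cases i <;> fin_cases j <;>
      first
        | exact absurd rfl hij'
        | exact Aab | exact Aac | exact Aad | exact Abc | exact Abd | exact Acd
        | exact Aab.symm | exact Aac.symm | exact Aad.symm | exact Abc.symm
        | exact Abd.symm | exact Acd.symm

/-- K23 minor with branch sets {u1},{u2} | {v1},{v2},{p,q}. -/
private lemma elg_hasMinor_K23 {u1 u2 v1 v2 p q : V}
    (h12 : u1 ≠ u2) (hu1v1 : u1 ≠ v1) (hu1v2 : u1 ≠ v2) (hu1p : u1 ≠ p) (hu1q : u1 ≠ q)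
    (hu2v1 : u2 ≠ v1) (hu2v2 : u2 ≠ v2) (hu2p : u2 ≠ p) (hu2q : u2 ≠ q)
    (hv12 : v1 ≠ v2) (hv1p : v1 ≠ p) (hv1q : v1 ≠ q) (hv2p : v2 ≠ p) (hv2q : v2 ≠ q)
    (hpq : G.Adj p q)
    (A11 : G.Adj u1 v1) (A12 : G.Adj u1 v2) (A21 : G.Adj u2 v1) (A22 : G.Adj u2 v2)
    (A1p : G.Adj u1 p ∨ G.Adj u1 q) (A2p : G.Adj u2 p ∨ G.Adj u2 q) :
    HasMinor G (completeBipartiteGraph (Fin 2) (Fin 3)) := by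
  have e1 := h12.symm; have e2 := hu1v1.symm; have e3 := hu1v2.symm
  have e4 := hu1p.symm; have e5 := hu1q.symm; have e6 := hu2v1.symm
  have e7 := hu2v2.symm; have e8 := hu2p.symm; have e9 := hu2q.symm
  have e10 := hv12.symm; have e11 := hv1p.symm; have e12 := hv1q.symm
  have e13 := hv2p.symm; have e14 := hv2q.symm
  refine ⟨fun w => Sum.elim (fun i => {![u1,u2] i}) (fun j => ![{v1}, {v2}, {p,q}] j) w, ?_, ?_, ?_⟩
  · rintro (i | j)
    · exact elg_induce_singleton_connected _
    · fin_cases j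
      · exact elg_induce_singleton_connected _
      · exact elg_induce_singleton_connected _
      · exact elg_induce_pair_connected hpq
  · rintro (i | j) (i' | j') hne <;>
      [(fin_cases i <;> fin_cases i');
       (fin_cases i <;> fin_cases j');
       (fin_cases j <;> fin_cases i');
       (fin_cases j <;> fin_cases j')] <;>
      simp_all [Set.disjoint_left]
  · rintro (i | j) (i' | j') hadj
    · simp at hadj
    · rcases A1p with h | h <;> rcases A2p with h' | h' <;>
        fin_cases i <;> fin_cases j' <;> dsimp only [Sum.elim_inl, Sum.elim_inr] <;>
        first
          | exact ⟨u1, rfl, v1, rfl, A11⟩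
          | exact ⟨u1, rfl, v2, rfl, A12⟩
          | exact ⟨u2, rfl, v1, rfl, A21⟩
          | exact ⟨u2, rfl, v2, rfl, A22⟩
          | exact ⟨u1, rfl, p, Or.inl rfl, h⟩
          | exact ⟨u1, rfl, q, Or.inr rfl, h⟩
          | exact ⟨u2, rfl, p, Or.inl rfl, h'⟩
          | exact ⟨u2, rfl, q, Or.inr rfl, h'⟩
    · rcases A1p with h | h <;> rcases A2p with h' | h' <;>
        fin_cases j <;> fin_cases i' <;> dsimp only [Sum.elim_inl, Sum.elim_inr] <;>
        first
          | exact ⟨v1, rfl, u1, rfl, A11.symm⟩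
          | exact ⟨v2, rfl, u1, rfl, A12.symm⟩
          | exact ⟨v1, rfl, u2, rfl, A21.symm⟩
          | exact ⟨v2, rfl, u2, rfl, A22.symm⟩
          | exact ⟨p, Or.inl rfl, u1, rfl, h.symm⟩
          | exact ⟨q, Or.inr rfl, u1, rfl, h.symm⟩
          | exact ⟨p, Or.inl rfl, u2, rfl, h'.symm⟩
          | exact ⟨q, Or.inr rfl, u2, rfl, h'.symm⟩
    · simp at hadj

/-- K23 minor with singleton branch sets {u1},{u2} | {v1},{v2},{v3}. -/
private lemma elg_hasMinor_K23s {u1 u2 v1 v2 v3 : V}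
    (h12 : u1 ≠ u2) (hu1v1 : u1 ≠ v1) (hu1v2 : u1 ≠ v2) (hu1v3 : u1 ≠ v3)
    (hu2v1 : u2 ≠ v1) (hu2v2 : u2 ≠ v2) (hu2v3 : u2 ≠ v3)
    (hv12 : v1 ≠ v2) (hv13 : v1 ≠ v3) (hv23 : v2 ≠ v3)
    (A11 : G.Adj u1 v1) (A12 : G.Adj u1 v2) (A13 : G.Adj u1 v3)
    (A21 : G.Adj u2 v1) (A22 : G.Adj u2 v2) (A23 : G.Adj u2 v3) :
    HasMinor G (completeBipartiteGraph (Fin 2) (Fin 3)) := by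
  have e1 := h12.symm; have e2 := hu1v1.symm; have e3 := hu1v2.symm
  have e4 := hu1v3.symm; have e6 := hu2v1.symm
  have e7 := hu2v2.symm; have e8 := hu2v3.symm
  have e10 := hv12.symm; have e11 := hv13.symm; have e12 := hv23.symm
  refine ⟨fun w => Sum.elim (fun i => {![u1,u2] i}) (fun j => {![v1,v2,v3] j}) w, ?_, ?_, ?_⟩
  · rintro (i | j)
    · exact elg_induce_singleton_connected _
    · exact elg_induce_singleton_connected _
  · rintro (i | j) (i' | j') hne <;>
      [(fin_cases i <;> fin_cases i');
       (fin_cases i <;> fin_cases j');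
       (fin_cases j <;> fin_cases i');
       (fin_cases j <;> fin_cases j')] <;>
      simp_all [Set.disjoint_left]
  · rintro (i | j) (i' | j') hadj
    · simp at hadj
    · fin_cases i <;> fin_cases j' <;>
        first
          | exact ⟨u1, rfl, v1, rfl, A11⟩
          | exact ⟨u1, rfl, v2, rfl, A12⟩
          | exact ⟨u1, rfl, v3, rfl, A13⟩
          | exact ⟨u2, rfl, v1, rfl, A21⟩
          | exact ⟨u2, rfl, v2, rfl, A22⟩
          | exact ⟨u2, rfl, v3, rfl, A23⟩
    · fin_cases j <;> fin_cases i' <;>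
        first
          | exact ⟨v1, rfl, u1, rfl, A11.symm⟩
          | exact ⟨v2, rfl, u1, rfl, A12.symm⟩
          | exact ⟨v3, rfl, u1, rfl, A13.symm⟩
          | exact ⟨v1, rfl, u2, rfl, A21.symm⟩
          | exact ⟨v2, rfl, u2, rfl, A22.symm⟩
          | exact ⟨v3, rfl, u2, rfl, A23.symm⟩
    · simp at hadj

private lemma elg_isC4_rotate {a b c d : V} (h : IsC4 G a b c d) : IsC4 G c d a b := by
  obtain ⟨h1,h2,h3,h4,h5,h6,a1,a2,a3,a4⟩ := h
  exact ⟨h6, h2.symm, h4.symm, h3.symm, h5.symm, h1, a3, a4, a1, a2⟩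

private lemma elg_oppC4_symm {e f : Sym2 V} (h : OppC4 G e f) : OppC4 G f e := by
  obtain ⟨a,b,c,d,hc,he,hf⟩ := h
  exact ⟨c,d,a,b, elg_isC4_rotate hc, hf, he⟩

private lemma elg_oppC4_elim {x y u v : V} (h : OppC4 G s(x,y) s(u,v)) :
    x ≠ u ∧ x ≠ v ∧ y ≠ u ∧ y ≠ v ∧
      ((G.Adj y u ∧ G.Adj x v) ∨ (G.Adj x u ∧ G.Adj y v)) := by
  obtain ⟨a,b,c,d,⟨hab,hac,had,hbc,hbd,hcd,Aab,Abc,Acd,Ada⟩,he,hf⟩ := h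
  rcases Sym2.eq_iff.mp he with ⟨rfl,rfl⟩|⟨rfl,rfl⟩ <;>
    rcases Sym2.eq_iff.mp hf with ⟨rfl,rfl⟩|⟨rfl,rfl⟩
  · exact ⟨hac, had, hbc, hbd, Or.inl ⟨Abc, Ada.symm⟩⟩
  · exact ⟨had, hac, hbd, hbc, Or.inr ⟨Ada.symm, Abc⟩⟩
  · exact ⟨hbc, hbd, hac, had, Or.inr ⟨Abc, Ada.symm⟩⟩
  · exact ⟨hbd, hbc, had, hac, Or.inl ⟨Ada.symm, Abc⟩⟩

private lemma elg_sym2_eq {u w : V} {z : Sym2 V} (hne : u ≠ w) (h1 : u ∈ z) (h2 : w ∈ z) :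
    z = s(u,w) :=
  Sym2.eq_of_ne_mem hne h1 h2 (Sym2.mem_iff.mpr (Or.inl rfl)) (Sym2.mem_iff.mpr (Or.inr rfl))

private lemma elg_edge_rep (e : Sym2 V) : ∃ x y, e = s(x,y) := by
  induction e using Sym2.ind with
  | _ x y => exact ⟨x, y, rfl⟩

/-- a vertex adjacent to two opposite vertices of a 4-cycle gives a K23 minor -/
private lemma elg_dead_opp (hK23 : ¬ HasMinor G (completeBipartiteGraph (Fin 2) (Fin 3)))
    {a b c d w : V}
    (hab : a ≠ b) (hac : a ≠ c) (had : a ≠ d) (hbc : b ≠ c) (hbd : b ≠ d) (hcd : c ≠ d)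
    (hwa : w ≠ a) (hwb : w ≠ b) (hwc : w ≠ c) (hwd : w ≠ d)
    (Aab : G.Adj a b) (Abc : G.Adj b c) (Acd : G.Adj c d) (Ada : G.Adj d a)
    (Awa : G.Adj w a) (Awc : G.Adj w c) : False :=
  hK23 (elg_hasMinor_K23s hac hab had hwa.symm hbc.symm hcd hwc.symm hbd hwb.symm hwd.symm
    Aab Ada.symm Awa.symm Abc.symm Acd Awc.symm)

/-- the degree bound for a clique of edges through a common vertex -/
private lemma elg_card_le_degree [Fintype V] [DecidableEq V] [DecidableRel G.Adj]
    {s : Finset G.edgeSet} {v : V} (h : ∀ e ∈ s, v ∈ (e : Sym2 V)) :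
    s.card ≤ G.degree v := by
  classical
  rw [← SimpleGraph.card_neighborFinset_eq_degree]
  refine Finset.card_le_card_of_injOn
    (fun (e : G.edgeSet) => if hv : v ∈ (e : Sym2 V) then Sym2.Mem.other' hv else v) ?_ ?_
  · intro e he
    dsimp only
    rw [dif_pos (h e he)]
    rw [Finset.mem_coe, SimpleGraph.mem_neighborFinset, ← SimpleGraph.mem_edgeSet]
    rw [Sym2.other_spec' (h e he)]
    exact e.2
  · intro e he f hf hef
    dsimp only at hef
    rw [dif_pos (h e (Finset.mem_coe.mp he)), dif_pos (h f (Finset.mem_coe.mp hf))] at hef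
    apply Subtype.ext
    rw [← Sym2.other_spec' (h e (Finset.mem_coe.mp he)),
      ← Sym2.other_spec' (h f (Finset.mem_coe.mp hf)), hef]

end ExtendedLineGraphHelpers


section ExtendedLineGraphMain

variable {V : Type*} {G : SimpleGraph V}

private lemma elg_nos {p q r u : V} (h1 : p ≠ r) (h2 : p ≠ u) (h3 : q ≠ r) (h4 : q ≠ u) :
    ∀ v : V, v ∈ s(p,q) → v ∉ s(r,u) := by
  intro v hv1 hv2
  rcases Sym2.mem_iff.mp hv1 with rfl | rfl <;> rcases Sym2.mem_iff.mp hv2 with h | h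
  exacts [h1 h, h2 h, h3 h, h4 h]

private lemma elg_cliqueA {s : Finset G.edgeSet}
    (hshare : ∀ e ∈ s, ∀ f ∈ s, e ≠ f → ∃ v : V, v ∈ (e : Sym2 V) ∧ v ∈ (f : Sym2 V))
    (hcom : ¬ ∃ v : V, ∀ e ∈ s, v ∈ (e : Sym2 V)) : s.card ≤ 3 := by
  classical
  push_neg at hcom
  rcases s.eq_empty_or_nonempty with rfl | ⟨e1, he1⟩
  · simp
  obtain ⟨x, y, hrep⟩ := elg_edge_rep (e1 : Sym2 V)
  have Axy : G.Adj x y := by rw [← SimpleGraph.mem_edgeSet, ← hrep]; exact e1.2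
  have hxy : x ≠ y := Axy.ne
  obtain ⟨f1, hf1, hxf1⟩ := hcom x
  have hef1 : e1 ≠ f1 := by
    intro h
    exact hxf1 (by rw [← h, hrep]; exact Sym2.mem_iff.mpr (Or.inl rfl))
  have hyf1 : y ∈ (f1 : Sym2 V) := by
    obtain ⟨v, hv1, hv2⟩ := hshare e1 he1 f1 hf1 hef1
    rw [hrep] at hv1
    rcases Sym2.mem_iff.mp hv1 with rfl | rfl
    · exact absurd hv2 hxf1
    · exact hv2
  obtain ⟨z, hf1rep⟩ := Sym2.mem_iff_exists.mp hyf1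
  have Ayz : G.Adj y z := by rw [← SimpleGraph.mem_edgeSet, ← hf1rep]; exact f1.2
  have hyz : y ≠ z := Ayz.ne
  have hxz : x ≠ z := by
    intro h
    exact hxf1 (by rw [hf1rep]; exact Sym2.mem_iff.mpr (Or.inr h))
  obtain ⟨g1, hg1, hyg1⟩ := hcom y
  have heg1 : e1 ≠ g1 := by
    intro h
    exact hyg1 (by rw [← h, hrep]; exact Sym2.mem_iff.mpr (Or.inr rfl))
  have hfg1 : f1 ≠ g1 := by
    intro h
    exact hyg1 (by rw [← h, hf1rep]; exact Sym2.mem_iff.mpr (Or.inl rfl))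
  have hxg1 : x ∈ (g1 : Sym2 V) := by
    obtain ⟨v, hv1, hv2⟩ := hshare e1 he1 g1 hg1 heg1
    rw [hrep] at hv1
    rcases Sym2.mem_iff.mp hv1 with rfl | rfl
    · exact hv2
    · exact absurd hv2 hyg1
  have hzg1 : z ∈ (g1 : Sym2 V) := by
    obtain ⟨v, hv1, hv2⟩ := hshare f1 hf1 g1 hg1 hfg1
    rw [hf1rep] at hv1
    rcases Sym2.mem_iff.mp hv1 with rfl | rfl
    · exact absurd hv2 hyg1
    · exact hv2
  have hg1rep : (g1 : Sym2 V) = s(x,z) := elg_sym2_eq hxz hxg1 hzg1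
  have hsub : s ⊆ {e1, f1, g1} := by
    intro h hh
    simp only [Finset.mem_insert, Finset.mem_singleton]
    by_cases h1 : h = e1
    · exact Or.inl h1
    by_cases h2 : h = f1
    · exact Or.inr (Or.inl h2)
    by_cases h3 : h = g1
    · exact Or.inr (Or.inr h3)
    exfalso
    obtain ⟨v, hv1, hv2⟩ := hshare h hh e1 he1 h1
    rw [hrep] at hv2
    rcases Sym2.mem_iff.mp hv2 with rfl | rfl
    · obtain ⟨u, hu1, hu2⟩ := hshare h hh f1 hf1 h2
      rw [hf1rep] at hu2
      rcases Sym2.mem_iff.mp hu2 with rfl | rfl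
      · exact h1 (Subtype.ext ((elg_sym2_eq hxy hv1 hu1).trans hrep.symm))
      · exact h3 (Subtype.ext ((elg_sym2_eq hxz hv1 hu1).trans hg1rep.symm))
    · obtain ⟨u, hu1, hu2⟩ := hshare h hh g1 hg1 h3
      rw [hg1rep] at hu2
      rcases Sym2.mem_iff.mp hu2 with rfl | rfl
      · exact h1 (Subtype.ext ((elg_sym2_eq hxy hu1 hv1).trans hrep.symm))
      · exact h2 (Subtype.ext ((elg_sym2_eq hyz hv1 hu1).trans hf1rep.symm))
  calc s.card ≤ ({e1, f1, g1} : Finset _).card := Finset.card_le_card hsub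
    _ ≤ 3 := (Finset.card_insert_le _ _).trans
        (Nat.succ_le_succ ((Finset.card_insert_le _ _).trans (by simp)))

private lemma elg_cliqueB
    (hK4 : ¬ HasMinor G (completeGraph (Fin 4)))
    (hK23 : ¬ HasMinor G (completeBipartiteGraph (Fin 2) (Fin 3)))
    {s : Finset G.edgeSet} (hclq : (Lplus G).IsClique ↑s)
    {e f : G.edgeSet} (he : e ∈ s) (hf : f ∈ s)
    {a b c d : V} (hC4 : IsC4 G a b c d)
    (hve : (e : Sym2 V) = s(a,b)) (hvf : (f : Sym2 V) = s(c,d)) :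
    s.card ≤ 5 := by
  classical
  obtain ⟨hab, hac, had, hbc, hbd, hcd, Aab, Abc, Acd, Ada⟩ := hC4
  have edgeAdj : ∀ (g : G.edgeSet) (x y : V), (g : Sym2 V) = s(x,y) → G.Adj x y := by
    intro g x y h
    rw [← SimpleGraph.mem_edgeSet, ← h]; exact g.2
  have hef : e ≠ f := by
    intro h
    rw [h, hvf] at hve
    rcases Sym2.eq_iff.mp hve with ⟨h1, _⟩ | ⟨h1, _⟩
    · exact hac h1.symm
    · exact hbc h1.symm
  have adj2 : ∀ {g h : G.edgeSet}, g ∈ s → h ∈ s → g ≠ h →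
      (∃ v : V, v ∈ (g : Sym2 V) ∧ v ∈ (h : Sym2 V)) ∨ OppC4 G (g : Sym2 V) (h : Sym2 V) := by
    intro g h hg hh hne
    have hadj := hclq (Finset.mem_coe.mpr hg) (Finset.mem_coe.mpr hh) hne
    unfold Lplus at hadj
    rw [SimpleGraph.fromRel_adj] at hadj
    rcases hadj.2 with (hsh | ho) | (hsh | ho)
    · exact Or.inl hsh
    · exact Or.inr ho
    · obtain ⟨v, h1, h2⟩ := hsh; exact Or.inl ⟨v, h2, h1⟩
    · exact Or.inr (elg_oppC4_symm ho)
  have noshare_opp : ∀ {g h : G.edgeSet}, g ∈ s → h ∈ s → g ≠ h →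
      (∀ v : V, v ∈ (g : Sym2 V) → v ∉ (h : Sym2 V)) → OppC4 G (g : Sym2 V) (h : Sym2 V) := by
    intro g h hg hh hne hns
    rcases adj2 hg hh hne with ⟨v, h1, h2⟩ | ho
    · exact absurd h2 (hns v h1)
    · exact ho
  have dead1 : G.Adj a c → G.Adj b d → False := fun h1 h2 =>
    hK4 (elg_hasMinor_K4 hab hac had hbc hbd hcd Aab h1 Ada.symm Abc h2 Acd)
  have deadac : ∀ {w : V}, w ≠ a → w ≠ b → w ≠ c → w ≠ d → G.Adj w a → G.Adj w c → False :=
    fun hwa hwb hwc hwd h1 h2 =>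
      elg_dead_opp hK23 hab hac had hbc hbd hcd hwa hwb hwc hwd Aab Abc Acd Ada h1 h2
  have deadbd : ∀ {w : V}, w ≠ a → w ≠ b → w ≠ c → w ≠ d → G.Adj w b → G.Adj w d → False :=
    fun hwa hwb hwc hwd h1 h2 =>
      elg_dead_opp hK23 hbc hbd hab.symm hcd hac.symm had.symm hwb hwc hwd hwa
        Abc Acd Ada Aab h1 h2
  have classify : ∀ g ∈ s, g ≠ e → g ≠ f →
      ((g : Sym2 V) = s(a,d) ∨ (g : Sym2 V) = s(b,c) ∨
       (g : Sym2 V) = s(a,c) ∨ (g : Sym2 V) = s(b,d) ∨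
       (∃ w : V, w ≠ a ∧ w ≠ b ∧ w ≠ c ∧ w ≠ d ∧
         (((g : Sym2 V) = s(a,w) ∧ G.Adj a c ∧ G.Adj d w) ∨
          ((g : Sym2 V) = s(c,w) ∧ G.Adj a c ∧ G.Adj b w) ∨
          ((g : Sym2 V) = s(b,w) ∧ G.Adj b d ∧ G.Adj c w) ∨
          ((g : Sym2 V) = s(d,w) ∧ G.Adj b d ∧ G.Adj a w)))) := by
    intro g hg hge hgf
    by_cases hag : a ∈ (g : Sym2 V)
    · obtain ⟨w, hgw⟩ := Sym2.mem_iff_exists.mp hag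
      have Aaw : G.Adj a w := edgeAdj g a w hgw
      have hwa : w ≠ a := Aaw.ne'
      by_cases hwb : w = b
      · exact absurd (Subtype.ext (by rw [hgw, hwb, hve])) hge
      by_cases hwd : w = d
      · exact Or.inl (by rw [hgw, hwd])
      by_cases hwc : w = c
      · exact Or.inr (Or.inr (Or.inl (by rw [hgw, hwc])))
      · have hopp := noshare_opp hg hf hgf
          (by rw [hgw, hvf]; exact elg_nos hac had (Ne.intro hwc) (Ne.intro hwd))
        rw [hgw, hvf] at hopp
        obtain ⟨_, _, _, _, hcase⟩ := elg_oppC4_elim hopp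
        rcases hcase with ⟨h1, h2⟩ | ⟨h1, h2⟩
        · exact (deadac hwa (Ne.intro hwb) (Ne.intro hwc) (Ne.intro hwd) Aaw.symm h1).elim
        · exact Or.inr (Or.inr (Or.inr (Or.inr ⟨w, hwa, Ne.intro hwb, Ne.intro hwc,
            Ne.intro hwd, Or.inl ⟨hgw, h1, h2.symm⟩⟩)))
    by_cases hbg : b ∈ (g : Sym2 V)
    · obtain ⟨w, hgw⟩ := Sym2.mem_iff_exists.mp hbg
      have Abw : G.Adj b w := edgeAdj g b w hgw
      have hwb : w ≠ b := Abw.ne'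
      have hwa : w ≠ a := fun h => hag (by rw [hgw, h]; exact Sym2.mem_iff.mpr (Or.inr rfl))
      by_cases hwc : w = c
      · exact Or.inr (Or.inl (by rw [hgw, hwc]))
      by_cases hwd : w = d
      · exact Or.inr (Or.inr (Or.inr (Or.inl (by rw [hgw, hwd]))))
      · have hopp := noshare_opp hg hf hgf
          (by rw [hgw, hvf]; exact elg_nos hbc hbd (Ne.intro hwc) (Ne.intro hwd))
        rw [hgw, hvf] at hopp
        obtain ⟨_, _, _, _, hcase⟩ := elg_oppC4_elim hopp
        rcases hcase with ⟨h1, h2⟩ | ⟨h1, h2⟩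
        · exact Or.inr (Or.inr (Or.inr (Or.inr ⟨w, hwa, hwb, Ne.intro hwc, Ne.intro hwd,
            Or.inr (Or.inr (Or.inl ⟨hgw, h2, h1.symm⟩))⟩)))
        · exact (deadbd hwa hwb (Ne.intro hwc) (Ne.intro hwd) Abw.symm h2).elim
    by_cases hcg : c ∈ (g : Sym2 V)
    · obtain ⟨w, hgw⟩ := Sym2.mem_iff_exists.mp hcg
      have Acw : G.Adj c w := edgeAdj g c w hgw
      have hwc : w ≠ c := Acw.ne'
      have hwa : w ≠ a := fun h => hag (by rw [hgw, h]; exact Sym2.mem_iff.mpr (Or.inr rfl))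
      have hwb : w ≠ b := fun h => hbg (by rw [hgw, h]; exact Sym2.mem_iff.mpr (Or.inr rfl))
      by_cases hwd : w = d
      · exact absurd (Subtype.ext (by rw [hgw, hwd, hvf])) hgf
      · have hopp := noshare_opp hg he hge
          (by rw [hgw, hve]; exact elg_nos hac.symm hbc.symm hwa hwb)
        rw [hgw, hve] at hopp
        obtain ⟨_, _, _, _, hcase⟩ := elg_oppC4_elim hopp
        rcases hcase with ⟨h1, h2⟩ | ⟨h1, h2⟩
        · exact (deadac hwa hwb hwc (Ne.intro hwd) h1 Acw.symm).elim
        · exact Or.inr (Or.inr (Or.inr (Or.inr ⟨w, hwa, hwb, hwc, Ne.intro hwd,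
            Or.inr (Or.inl ⟨hgw, h1.symm, h2.symm⟩)⟩)))
    by_cases hdg : d ∈ (g : Sym2 V)
    · obtain ⟨w, hgw⟩ := Sym2.mem_iff_exists.mp hdg
      have Adw : G.Adj d w := edgeAdj g d w hgw
      have hwd : w ≠ d := Adw.ne'
      have hwa : w ≠ a := fun h => hag (by rw [hgw, h]; exact Sym2.mem_iff.mpr (Or.inr rfl))
      have hwb : w ≠ b := fun h => hbg (by rw [hgw, h]; exact Sym2.mem_iff.mpr (Or.inr rfl))
      have hwc : w ≠ c := fun h => hcg (by rw [hgw, h]; exact Sym2.mem_iff.mpr (Or.inr rfl))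
      have hopp := noshare_opp hg he hge
        (by rw [hgw, hve]; exact elg_nos had.symm hbd.symm hwa hwb)
      rw [hgw, hve] at hopp
      obtain ⟨_, _, _, _, hcase⟩ := elg_oppC4_elim hopp
      rcases hcase with ⟨h1, h2⟩ | ⟨h1, h2⟩
      · exact Or.inr (Or.inr (Or.inr (Or.inr ⟨w, hwa, hwb, hwc, hwd,
          Or.inr (Or.inr (Or.inr ⟨hgw, h2.symm, h1.symm⟩))⟩)))
      · exact (deadbd hwa hwb hwc hwd h2 Adw.symm).elim
    · exfalso
      obtain ⟨w, x, hgwx⟩ := elg_edge_rep (g : Sym2 V)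
      have Awx : G.Adj w x := edgeAdj g w x hgwx
      have hwmem : w ∈ (g : Sym2 V) := by rw [hgwx]; exact Sym2.mem_iff.mpr (Or.inl rfl)
      have hxmem : x ∈ (g : Sym2 V) := by rw [hgwx]; exact Sym2.mem_iff.mpr (Or.inr rfl)
      have hoppE : OppC4 G (g : Sym2 V) (e : Sym2 V) := by
        rcases adj2 hg he hge with ⟨v, hv1, hv2⟩ | ho
        · exfalso
          rw [hve] at hv2
          rcases Sym2.mem_iff.mp hv2 with rfl | rfl
          · exact hag hv1
          · exact hbg hv1
        · exact ho
      have hoppF : OppC4 G (g : Sym2 V) (f : Sym2 V) := by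
        rcases adj2 hg hf hgf with ⟨v, hv1, hv2⟩ | ho
        · exfalso
          rw [hvf] at hv2
          rcases Sym2.mem_iff.mp hv2 with rfl | rfl
          · exact hcg hv1
          · exact hdg hv1
        · exact ho
      rw [hgwx, hve] at hoppE
      rw [hgwx, hvf] at hoppF
      obtain ⟨hwa', hwb', hxa', hxb', hcE⟩ := elg_oppC4_elim hoppE
      obtain ⟨hwc', hwd', hxc', hxd', hcF⟩ := elg_oppC4_elim hoppF
      rcases hcE with ⟨h1, h2⟩ | ⟨h1, h2⟩ <;> rcases hcF with ⟨h3, h4⟩ | ⟨h3, h4⟩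
      · exact deadac hxa' hxb' hxc' hxd' h1 h3
      · exact hK23 (elg_hasMinor_K23 (u1 := a) (u2 := c) (v1 := b) (v2 := d) (p := w) (q := x)
          hac hab had hwa'.symm hxa'.symm hbc.symm hcd hwc'.symm hxc'.symm hbd
          hwb'.symm hxb'.symm hwd'.symm hxd'.symm
          Awx Aab Ada.symm Abc.symm Acd (Or.inr h1.symm) (Or.inl h3.symm))
      · exact hK23 (elg_hasMinor_K23 (u1 := b) (u2 := d) (v1 := a) (v2 := c) (p := w) (q := x)
          hbd hab.symm hbc hwb'.symm hxb'.symm had.symm hcd.symm hwd'.symm hxd'.symm hac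
          hwa'.symm hxa'.symm hwc'.symm hxc'.symm
          Awx Aab.symm Abc Ada Acd.symm (Or.inr h2.symm) (Or.inl h4.symm))
      · exact deadac hwa' hwb' hwc' hwd' h1 h3
  -- kill lemmas
  have killBC : ∀ g ∈ s, (g : Sym2 V) = s(b,c) → ∀ t ∈ s, ∀ w : V,
      w ≠ a → w ≠ b → w ≠ c → w ≠ d →
      (((t : Sym2 V) = s(a,w) ∧ G.Adj d w) ∨ ((t : Sym2 V) = s(d,w) ∧ G.Adj a w)) → False := by
    intro g hg hgrep t ht w hwa hwb hwc hwd hcase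
    have hgt : g ≠ t := by
      intro h
      rw [h] at hgrep
      rcases hcase with ⟨h1, _⟩ | ⟨h1, _⟩ <;> rw [hgrep] at h1
      · rcases Sym2.eq_iff.mp h1 with ⟨h2, _⟩ | ⟨h2, _⟩
        · exact hab h2.symm
        · exact hwb h2.symm
      · rcases Sym2.eq_iff.mp h1 with ⟨h2, _⟩ | ⟨h2, _⟩
        · exact hbd h2
        · exact hwb h2.symm
    rcases hcase with ⟨htw, hdw⟩ | ⟨htw, haw⟩
    · have Aaw : G.Adj a w := edgeAdj t a w htw
      have hopp := noshare_opp hg ht hgt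
        (by rw [hgrep, htw]; exact elg_nos hab.symm hwb.symm hac.symm hwc.symm)
      rw [hgrep, htw] at hopp
      obtain ⟨_, _, _, _, hc2⟩ := elg_oppC4_elim hopp
      rcases hc2 with ⟨h1, h2⟩ | ⟨h1, h2⟩
      · exact deadbd hwa hwb hwc hwd h2.symm hdw.symm
      · exact deadac hwa hwb hwc hwd Aaw.symm h2.symm
    · have Adw : G.Adj d w := edgeAdj t d w htw
      have hopp := noshare_opp hg ht hgt
        (by rw [hgrep, htw]; exact elg_nos hbd hwb.symm hcd hwc.symm)
      rw [hgrep, htw] at hopp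
      obtain ⟨_, _, _, _, hc2⟩ := elg_oppC4_elim hopp
      rcases hc2 with ⟨h1, h2⟩ | ⟨h1, h2⟩
      · exact deadbd hwa hwb hwc hwd h2.symm Adw.symm
      · exact deadac hwa hwb hwc hwd haw.symm h2.symm
  have killAD : ∀ g ∈ s, (g : Sym2 V) = s(a,d) → ∀ t ∈ s, ∀ w : V,
      w ≠ a → w ≠ b → w ≠ c → w ≠ d →
      (((t : Sym2 V) = s(c,w) ∧ G.Adj b w) ∨ ((t : Sym2 V) = s(b,w) ∧ G.Adj c w)) → False := by
    intro g hg hgrep t ht w hwa hwb hwc hwd hcase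
    have hgt : g ≠ t := by
      intro h
      rw [h] at hgrep
      rcases hcase with ⟨h1, _⟩ | ⟨h1, _⟩ <;> rw [hgrep] at h1
      · rcases Sym2.eq_iff.mp h1 with ⟨h2, _⟩ | ⟨h2, _⟩
        · exact hac h2
        · exact hwa h2.symm
      · rcases Sym2.eq_iff.mp h1 with ⟨h2, _⟩ | ⟨h2, _⟩
        · exact hab h2
        · exact hwa h2.symm
    rcases hcase with ⟨htw, hbw⟩ | ⟨htw, hcw⟩
    · have Acw : G.Adj c w := edgeAdj t c w htw
      have hopp := noshare_opp hg ht hgt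
        (by rw [hgrep, htw]; exact elg_nos hac hwa.symm hcd.symm hwd.symm)
      rw [hgrep, htw] at hopp
      obtain ⟨_, _, _, _, hc2⟩ := elg_oppC4_elim hopp
      rcases hc2 with ⟨h1, h2⟩ | ⟨h1, h2⟩
      · exact deadac hwa hwb hwc hwd h2.symm Acw.symm
      · exact deadbd hwa hwb hwc hwd hbw.symm h2.symm
    · have Abw : G.Adj b w := edgeAdj t b w htw
      have hopp := noshare_opp hg ht hgt
        (by rw [hgrep, htw]; exact elg_nos hab hwa.symm hbd.symm hwd.symm)
      rw [hgrep, htw] at hopp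
      obtain ⟨_, _, _, _, hc2⟩ := elg_oppC4_elim hopp
      rcases hc2 with ⟨h1, h2⟩ | ⟨h1, h2⟩
      · exact deadac hwa hwb hwc hwd h2.symm hcw.symm
      · exact deadbd hwa hwb hwc hwd Abw.symm h2.symm
  have uniq : ∀ t1 ∈ s, ∀ t2 ∈ s, t1 ≠ t2 → ∀ w x : V,
      w ≠ a → w ≠ b → w ≠ c → w ≠ d → x ≠ a → x ≠ b → x ≠ c → x ≠ d →
      (((t1 : Sym2 V) = s(a,w) ∧ G.Adj a c ∧ G.Adj d w) ∨
       ((t1 : Sym2 V) = s(c,w) ∧ G.Adj a c ∧ G.Adj b w) ∨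
       ((t1 : Sym2 V) = s(b,w) ∧ G.Adj b d ∧ G.Adj c w) ∨
       ((t1 : Sym2 V) = s(d,w) ∧ G.Adj b d ∧ G.Adj a w)) →
      (((t2 : Sym2 V) = s(a,x) ∧ G.Adj a c ∧ G.Adj d x) ∨
       ((t2 : Sym2 V) = s(c,x) ∧ G.Adj a c ∧ G.Adj b x) ∨
       ((t2 : Sym2 V) = s(b,x) ∧ G.Adj b d ∧ G.Adj c x) ∨
       ((t2 : Sym2 V) = s(d,x) ∧ G.Adj b d ∧ G.Adj a x)) → False := by
    intro t1 ht1 t2 ht2 hne w x hwa hwb hwc hwd hxa hxb hxc hxd hc1 hc2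
    have hvne : (t1 : Sym2 V) ≠ (t2 : Sym2 V) := fun h => hne (Subtype.ext h)
    rcases hc1 with ⟨e1, hch1, hd1⟩ | ⟨e1, hch1, hd1⟩ | ⟨e1, hch1, hd1⟩ | ⟨e1, hch1, hd1⟩ <;>
      rcases hc2 with ⟨e2, hch2, hd2⟩ | ⟨e2, hch2, hd2⟩ | ⟨e2, hch2, hd2⟩ | ⟨e2, hch2, hd2⟩
    · -- (a,a)
      have hwx : w ≠ x := fun h => hvne (by rw [e1, e2, h])
      exact hK23 (elg_hasMinor_K23 (u1 := a) (u2 := d) (v1 := w) (v2 := x) (p := b) (q := c)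
        had hwa.symm hxa.symm hab hac hwd.symm hxd.symm hbd.symm hcd.symm hwx hwb hwc hxb hxc
        Abc (edgeAdj t1 a w e1) (edgeAdj t2 a x e2) hd1 hd2 (Or.inl Aab) (Or.inr Acd.symm))
    · -- (a,c)
      by_cases hwx : w = x
      · subst hwx
        exact deadbd hwa hwb hwc hwd hd2.symm hd1.symm
      · have hopp := noshare_opp ht1 ht2 hne
          (by rw [e1, e2]; exact elg_nos hac hxa.symm hwc (Ne.intro hwx))
        rw [e1, e2] at hopp
        obtain ⟨_, _, _, _, hcc⟩ := elg_oppC4_elim hopp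
        rcases hcc with ⟨h1, h2⟩ | ⟨h1, h2⟩
        · exact deadac hwa hwb hwc hwd (edgeAdj t1 a w e1).symm h1
        · exact hK23 (elg_hasMinor_K23 (u1 := b) (u2 := d) (v1 := a) (v2 := c) (p := w) (q := x)
            hbd hab.symm hbc hwb.symm hxb.symm had.symm hcd.symm hwd.symm hxd.symm hac
            hwa.symm hxa.symm hwc.symm hxc.symm
            h2 Aab.symm Abc Ada Acd.symm (Or.inr hd2) (Or.inl hd1))
    · -- (a,b)
      exact dead1 hch1 hch2
    · -- (a,d)
      exact dead1 hch1 hch2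
    · -- (c,a)
      by_cases hwx : w = x
      · subst hwx
        exact deadbd hwa hwb hwc hwd hd1.symm hd2.symm
      · have hopp := noshare_opp ht1 ht2 hne
          (by rw [e1, e2]; exact elg_nos hac.symm hxc.symm hwa (Ne.intro hwx))
        rw [e1, e2] at hopp
        obtain ⟨_, _, _, _, hcc⟩ := elg_oppC4_elim hopp
        rcases hcc with ⟨h1, h2⟩ | ⟨h1, h2⟩
        · exact deadac hwa hwb hwc hwd h1 (edgeAdj t1 c w e1).symm
        · exact hK23 (elg_hasMinor_K23 (u1 := b) (u2 := d) (v1 := a) (v2 := c) (p := w) (q := x)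
            hbd hab.symm hbc hwb.symm hxb.symm had.symm hcd.symm hwd.symm hxd.symm hac
            hwa.symm hxa.symm hwc.symm hxc.symm
            h2 Aab.symm Abc Ada Acd.symm (Or.inl hd1) (Or.inr hd2))
    · -- (c,c)
      have hwx : w ≠ x := fun h => hvne (by rw [e1, e2, h])
      exact hK23 (elg_hasMinor_K23 (u1 := c) (u2 := b) (v1 := w) (v2 := x) (p := d) (q := a)
        hbc.symm hwc.symm hxc.symm hcd hac.symm hwb.symm hxb.symm hbd hab.symm hwx hwd hwa hxd hxa
        Ada (edgeAdj t1 c w e1) (edgeAdj t2 c x e2) hd1 hd2 (Or.inl Acd) (Or.inr Aab.symm))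
    · -- (c,b)
      exact dead1 hch1 hch2
    · -- (c,d)
      exact dead1 hch1 hch2
    · -- (b,a)
      exact dead1 hch2 hch1
    · -- (b,c)
      exact dead1 hch2 hch1
    · -- (b,b)
      have hwx : w ≠ x := fun h => hvne (by rw [e1, e2, h])
      exact hK23 (elg_hasMinor_K23 (u1 := b) (u2 := c) (v1 := w) (v2 := x) (p := d) (q := a)
        hbc hwb.symm hxb.symm hbd hab.symm hwc.symm hxc.symm hcd hac.symm hwx hwd hwa hxd hxa
        Ada (edgeAdj t1 b w e1) (edgeAdj t2 b x e2) hd1 hd2 (Or.inr Aab.symm) (Or.inl Acd))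
    · -- (b,d)
      by_cases hwx : w = x
      · subst hwx
        exact deadac hwa hwb hwc hwd hd2.symm hd1.symm
      · have hopp := noshare_opp ht1 ht2 hne
          (by rw [e1, e2]; exact elg_nos hbd hxb.symm hwd (Ne.intro hwx))
        rw [e1, e2] at hopp
        obtain ⟨_, _, _, _, hcc⟩ := elg_oppC4_elim hopp
        rcases hcc with ⟨h1, h2⟩ | ⟨h1, h2⟩
        · exact deadbd hwa hwb hwc hwd (edgeAdj t1 b w e1).symm h1
        · exact hK23 (elg_hasMinor_K23 (u1 := a) (u2 := c) (v1 := b) (v2 := d) (p := w) (q := x)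
            hac hab had hwa.symm hxa.symm hbc.symm hcd hwc.symm hxc.symm hbd
            hwb.symm hxb.symm hwd.symm hxd.symm
            h2 Aab Ada.symm Abc.symm Acd (Or.inr hd2) (Or.inl hd1))
    · -- (d,a)
      exact dead1 hch2 hch1
    · -- (d,c)
      exact dead1 hch2 hch1
    · -- (d,b)
      by_cases hwx : w = x
      · subst hwx
        exact deadac hwa hwb hwc hwd hd1.symm hd2.symm
      · have hopp := noshare_opp ht1 ht2 hne
          (by rw [e1, e2]; exact elg_nos hbd.symm hxd.symm hwb (Ne.intro hwx))
        rw [e1, e2] at hopp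
        obtain ⟨_, _, _, _, hcc⟩ := elg_oppC4_elim hopp
        rcases hcc with ⟨h1, h2⟩ | ⟨h1, h2⟩
        · exact deadbd hwa hwb hwc hwd h1 (edgeAdj t1 d w e1).symm
        · exact hK23 (elg_hasMinor_K23 (u1 := a) (u2 := c) (v1 := b) (v2 := d) (p := w) (q := x)
            hac hab had hwa.symm hxa.symm hbc.symm hcd hwc.symm hxc.symm hbd
            hwb.symm hxb.symm hwd.symm hxd.symm
            h2 Aab Ada.symm Abc.symm Acd (Or.inl hd1) (Or.inr hd2))
    · -- (d,d)
      have hwx : w ≠ x := fun h => hvne (by rw [e1, e2, h])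
      exact hK23 (elg_hasMinor_K23 (u1 := d) (u2 := a) (v1 := w) (v2 := x) (p := b) (q := c)
        had.symm hwd.symm hxd.symm hbd.symm hcd.symm hwa.symm hxa.symm hab hac hwx hwb hwc hxb hxc
        Abc (edgeAdj t1 d w e1) (edgeAdj t2 d x e2) hd1 hd2 (Or.inr Acd.symm) (Or.inl Aab))
  -- counting
  set s' := (s.erase e).erase f with hs'def
  have hs'mem : ∀ g ∈ s', g ∈ s ∧ g ≠ e ∧ g ≠ f := by
    intro g hgs'
    simp only [hs'def, Finset.mem_erase] at hgs'
    exact ⟨hgs'.2.2, hgs'.2.1, hgs'.1⟩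
  have hcard2 : s.card ≤ s'.card + 2 := by
    have h1 : f ∈ s.erase e := Finset.mem_erase.mpr ⟨fun h => hef h.symm, hf⟩
    have h2 := Finset.card_erase_of_mem h1
    have h3 := Finset.card_erase_of_mem he
    have h4 : 0 < (s.erase e).card := Finset.card_pos.mpr ⟨f, h1⟩
    have h5 : 0 < s.card := Finset.card_pos.mpr ⟨e, he⟩
    rw [hs'def, h2, h3]
    omega
  suffices h3 : s'.card ≤ 3 by omega
  have himgcard : s'.card = (s'.image (fun g : G.edgeSet => (g : Sym2 V))).card :=
    (Finset.card_image_of_injective s' Subtype.val_injective).symm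
  by_cases hT : ∃ t ∈ s', ∃ w : V, w ≠ a ∧ w ≠ b ∧ w ≠ c ∧ w ≠ d ∧
      (((t : Sym2 V) = s(a,w) ∧ G.Adj a c ∧ G.Adj d w) ∨
       ((t : Sym2 V) = s(c,w) ∧ G.Adj a c ∧ G.Adj b w) ∨
       ((t : Sym2 V) = s(b,w) ∧ G.Adj b d ∧ G.Adj c w) ∨
       ((t : Sym2 V) = s(d,w) ∧ G.Adj b d ∧ G.Adj a w))
  · obtain ⟨t, hts', w, hwa0, hwb0, hwc0, hwd0, hTcase⟩ := hT
    obtain ⟨hts, hte, htf⟩ := hs'mem t hts'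
    have main : ∀ (X Y : Sym2 V),
        (∀ g ∈ s, (g : Sym2 V) = s(a,d) → s(a,d) = X ∨ s(a,d) = Y) →
        (∀ g ∈ s, (g : Sym2 V) = s(b,c) → s(b,c) = X ∨ s(b,c) = Y) →
        (∀ g ∈ s, (g : Sym2 V) = s(a,c) → s(a,c) = X ∨ s(a,c) = Y) →
        (∀ g ∈ s, (g : Sym2 V) = s(b,d) → s(b,d) = X ∨ s(b,d) = Y) →
        s'.card ≤ 3 := by
      intro X Y hX1 hX2 hX3 hX4
      have hsubT : (s'.image (fun g : G.edgeSet => (g : Sym2 V))) ⊆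
          {X, Y, (t : Sym2 V)} := by
        intro z hz
        obtain ⟨g, hgs', rfl⟩ := Finset.mem_image.mp hz
        obtain ⟨hgs, hge, hgf⟩ := hs'mem g hgs'
        simp only [Finset.mem_insert, Finset.mem_singleton]
        rcases classify g hgs hge hgf with h | h | h | h |
          ⟨x, hxa0, hxb0, hxc0, hxd0, hcase⟩
        · rcases hX1 g hgs h with h' | h'
          · exact Or.inl (h.trans h')
          · exact Or.inr (Or.inl (h.trans h'))
        · rcases hX2 g hgs h with h' | h'
          · exact Or.inl (h.trans h')
          · exact Or.inr (Or.inl (h.trans h'))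
        · rcases hX3 g hgs h with h' | h'
          · exact Or.inl (h.trans h')
          · exact Or.inr (Or.inl (h.trans h'))
        · rcases hX4 g hgs h with h' | h'
          · exact Or.inl (h.trans h')
          · exact Or.inr (Or.inl (h.trans h'))
        · by_cases hgt : g = t
          · exact Or.inr (Or.inr (by rw [hgt]))
          · exact (uniq g hgs t hts hgt x w hxa0 hxb0 hxc0 hxd0 hwa0 hwb0 hwc0 hwd0
              hcase hTcase).elim
      calc s'.card = _ := himgcard
        _ ≤ ({X, Y, (t : Sym2 V)} : Finset (Sym2 V)).card := Finset.card_le_card hsubT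
        _ ≤ 3 := (Finset.card_insert_le _ _).trans
            (Nat.succ_le_succ ((Finset.card_insert_le _ _).trans (by simp)))
    rcases hTcase with ⟨htw, hch, hdat⟩ | ⟨htw, hch, hdat⟩ | ⟨htw, hch, hdat⟩ | ⟨htw, hch, hdat⟩
    · -- t at a : allowed {s(a,d), s(a,c)}
      refine main s(a,d) s(a,c) (fun g hgs h => Or.inl rfl) ?_ (fun g hgs h => Or.inr rfl) ?_
      · intro g hgs h
        exact (killBC g hgs h t hts w hwa0 hwb0 hwc0 hwd0 (Or.inl ⟨htw, hdat⟩)).elim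
      · intro g hgs h
        exact (dead1 hch (edgeAdj g b d h)).elim
    · -- t at c : allowed {s(b,c), s(a,c)}
      refine main s(b,c) s(a,c) ?_ (fun g hgs h => Or.inl rfl) (fun g hgs h => Or.inr rfl) ?_
      · intro g hgs h
        exact (killAD g hgs h t hts w hwa0 hwb0 hwc0 hwd0 (Or.inl ⟨htw, hdat⟩)).elim
      · intro g hgs h
        exact (dead1 hch (edgeAdj g b d h)).elim
    · -- t at b : allowed {s(b,c), s(b,d)}
      refine main s(b,c) s(b,d) ?_ (fun g hgs h => Or.inl rfl) ?_ (fun g hgs h => Or.inr rfl)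
      · intro g hgs h
        exact (killAD g hgs h t hts w hwa0 hwb0 hwc0 hwd0 (Or.inr ⟨htw, hdat⟩)).elim
      · intro g hgs h
        exact (dead1 (edgeAdj g a c h) hch).elim
    · -- t at d : allowed {s(a,d), s(b,d)}
      refine main s(a,d) s(b,d) (fun g hgs h => Or.inl rfl) ?_ ?_ (fun g hgs h => Or.inr rfl)
      · intro g hgs h
        exact (killBC g hgs h t hts w hwa0 hwb0 hwc0 hwd0 (Or.inr ⟨htw, hdat⟩)).elim
      · intro g hgs h
        exact (dead1 (edgeAdj g a c h) hch).elim
  · -- no type II edge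
    have hclass4 : ∀ g ∈ s', (g : Sym2 V) = s(a,d) ∨ (g : Sym2 V) = s(b,c) ∨
        (g : Sym2 V) = s(a,c) ∨ (g : Sym2 V) = s(b,d) := by
      intro g hgs'
      obtain ⟨hgs, hge, hgf⟩ := hs'mem g hgs'
      rcases classify g hgs hge hgf with h | h | h | h | ⟨x, h1, h2, h3, h4, hcase⟩
      · exact Or.inl h
      · exact Or.inr (Or.inl h)
      · exact Or.inr (Or.inr (Or.inl h))
      · exact Or.inr (Or.inr (Or.inr h))
      · exact absurd ⟨g, hgs', x, h1, h2, h3, h4, hcase⟩ hT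
    by_cases hbd2 : ∃ g ∈ s', (g : Sym2 V) = s(b,d)
    · obtain ⟨g0, hg0, hg0rep⟩ := hbd2
      have Abd : G.Adj b d := edgeAdj g0 b d hg0rep
      have hsubT : (s'.image (fun g : G.edgeSet => (g : Sym2 V))) ⊆
          {s(a,d), s(b,c), s(b,d)} := by
        intro z hz
        obtain ⟨g, hgs', rfl⟩ := Finset.mem_image.mp hz
        simp only [Finset.mem_insert, Finset.mem_singleton]
        rcases hclass4 g hgs' with h | h | h | h
        · exact Or.inl h
        · exact Or.inr (Or.inl h)
        · exact (dead1 (edgeAdj g a c h) Abd).elim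
        · exact Or.inr (Or.inr h)
      calc s'.card = _ := himgcard
        _ ≤ ({s(a,d), s(b,c), s(b,d)} : Finset (Sym2 V)).card := Finset.card_le_card hsubT
        _ ≤ 3 := (Finset.card_insert_le _ _).trans
            (Nat.succ_le_succ ((Finset.card_insert_le _ _).trans (by simp)))
    · have hsubT : (s'.image (fun g : G.edgeSet => (g : Sym2 V))) ⊆
          {s(a,d), s(b,c), s(a,c)} := by
        intro z hz
        obtain ⟨g, hgs', rfl⟩ := Finset.mem_image.mp hz
        simp only [Finset.mem_insert, Finset.mem_singleton]
        rcases hclass4 g hgs' with h | h | h | h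
        · exact Or.inl h
        · exact Or.inr (Or.inl h)
        · exact Or.inr (Or.inr h)
        · exact absurd ⟨g, hgs', h⟩ hbd2
      calc s'.card = _ := himgcard
        _ ≤ ({s(a,d), s(b,c), s(a,c)} : Finset (Sym2 V)).card := Finset.card_le_card hsubT
        _ ≤ 3 := (Finset.card_insert_le _ _).trans
            (Nat.succ_le_succ ((Finset.card_insert_le _ _).trans (by simp)))

end ExtendedLineGraphMain

theorem cliqueNum_Lplus_outerplanar_le {V : Type*} [Fintype V] [DecidableEq V]
    (G : SimpleGraph V) [DecidableRel G.Adj] (hG : IsOuterplanar G)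
    (hΔ : 5 ≤ G.maxDegree) : (Lplus G).cliqueNum ≤ G.maxDegree := by
  classical
  obtain ⟨s, hs⟩ := (Lplus G).exists_isNClique_cliqueNum
  rw [← hs.card_eq]
  by_cases hcom : ∃ v : V, ∀ e ∈ s, v ∈ (e : Sym2 V)
  · obtain ⟨v, hv⟩ := hcom
    exact le_trans (elg_card_le_degree hv) (G.degree_le_maxDegree v)
  · have h5 : s.card ≤ 5 := by
      by_cases hdisj : ∃ e ∈ s, ∃ f ∈ s, e ≠ f ∧
          ∀ v : V, ¬(v ∈ (e : Sym2 V) ∧ v ∈ (f : Sym2 V))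
      · obtain ⟨e, he, f, hf, hef, hnsh⟩ := hdisj
        have hadj := hs.isClique (Finset.mem_coe.mpr he) (Finset.mem_coe.mpr hf) hef
        unfold Lplus at hadj
        rw [SimpleGraph.fromRel_adj] at hadj
        have hopp : OppC4 G (e : Sym2 V) (f : Sym2 V) := by
          rcases hadj.2 with (hsh | ho) | (hsh | ho)
          · obtain ⟨v, h1, h2⟩ := hsh
            exact (hnsh v ⟨h1, h2⟩).elim
          · exact ho
          · obtain ⟨v, h1, h2⟩ := hsh
            exact (hnsh v ⟨h2, h1⟩).elim
          · exact elg_oppC4_symm ho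
        obtain ⟨a, b, c, d, hC4, hve, hvf⟩ := hopp
        exact elg_cliqueB hG.1 hG.2 hs.isClique he hf hC4 hve hvf
      · push_neg at hdisj
        refine le_trans (elg_cliqueA ?_ hcom) (by norm_num)
        intro e he f hf hef
        obtain ⟨v, hv⟩ := hdisj e he f hf hef
        exact ⟨v, hv⟩
    exact le_trans h5 hΔ
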